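/- Let Σ be an alphabet and N ⊆ Σ a nonempty subset, and let s be a string over Σ that is empty or whose first symbol is not in N. Then every t with s P_N t also satisfies s (π_N ⨟ P_N) t. Moreover, if s contains at least one symbol of N then the inclusion is strict at s: the set {t : s (π_N ⨟ P_N) t} strictly contains {t : s P_N t}; and if s contains no symbol of N then the two sets are equal. -/

import Mathlib

/-- The `N`-pump: the smallest relation with `ε P ε`, `s P s`, and closed
under inserting a symbol `b ∈ N` at any position except before the first
symbol. -/
inductive Pump {A : Type} (N : Set A) : List A → List A → Prop
  | refl (s : List A) : Pump N s s
  | insert {s t1 t2 : List A} {b : A} :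
      b ∈ N → Pump N s (t1 ++ t2) → t1 ≠ [] → Pump N s (t1 ++ b :: t2)

open Classical in
/-- The `N`-shrink: delete all occurrences of symbols in `N`. -/
noncomputable def shrink {A : Type} (N : Set A) : List A → List A
  | [] => []
  | a :: s => if a ∈ N then shrink N s else a :: shrink N s

/-- The `N`-shrink, as a relation (graph of the function). -/
def shrinkRel {A : Type} (N : Set A) : List A → List A → Prop :=
  fun s t => t = shrink N s

/-- Composition of relations, `R ⨟ S`. -/
def relComp {α β γ : Type*} (R : α → β → Prop) (S : β → γ → Prop) :
    α → γ → Prop :=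
  fun a c => ∃ b, R a b ∧ S b c

/-- for nonempty `N` and a string `s` that is empty or whose
first symbol is not in `N`: every `t` with `s P_N t` also has
`s (π_N ⨟ P_N) t`; if `s` contains a symbol of `N` the containment of the
image sets is strict; if `s` contains no symbol of `N` they are equal. -/

lemma pump_trans {A : Type} {N : Set A} {a b c : List A} (hab : Pump N a b)
    (hbc : Pump N b c) : Pump N a c := by
  induction hbc with
  | refl => exact hab
  | insert hb _ ht1 ih => exact Pump.insert hb ih ht1

lemma pump_length {A : Type} {N : Set A} {a b : List A} (h : Pump N a b) :
    a.length ≤ b.length := by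
  induction h with
  | refl => exact le_refl _
  | insert hb _ ht1 ih => simp_all; omega

lemma shrink_length_lt {A : Type} {N : Set A} {s : List A}
    (h : ∃ a ∈ s, a ∈ N) : (shrink N s).length < s.length := by
  induction s with
  | nil => simp at h
  | cons a s ih =>
    simp only [shrink]
    by_cases ha : a ∈ N
    · simp only [ha, if_pos]
      have : (shrink N s).length ≤ s.length := by
        clear h ih ha
        induction s with
        | nil => simp [shrink]
        | cons b s ih =>
          simp only [shrink]
          split <;> simp <;> omega
      simp; omega
    · simp only [ha, if_neg, not_false_iff, List.length_cons]
      have : ∃ b ∈ s, b ∈ N := by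
        rcases h with ⟨b, hb, hbN⟩
        rcases List.mem_cons.mp hb with h | h
        · exact absurd (h ▸ hbN) ha
        · exact ⟨b, h, hbN⟩
      exact Nat.succ_lt_succ (ih this)

lemma shrink_eq_self {A : Type} {N : Set A} {s : List A}
    (h : ∀ a ∈ s, a ∉ N) : shrink N s = s := by
  induction s with
  | nil => rfl
  | cons a s ih =>
    simp only [shrink, if_neg (h a List.mem_cons_self)]
    rw [ih (fun b hb => h b (List.mem_cons_of_mem a hb))]

lemma pump_shrink_aux {A : Type} {N : Set A} (s : List A) :
    ∀ t1 : List A, t1 ≠ [] → Pump N (t1 ++ shrink N s) (t1 ++ s) := by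
  induction s with
  | nil => intro t1 _; simpa [shrink] using Pump.refl t1
  | cons b s ih =>
    intro t1 ht1
    by_cases hb : b ∈ N
    · simp only [shrink, if_pos hb]
      exact Pump.insert hb (ih t1 ht1) ht1
    · simp only [shrink, if_neg hb]
      have := ih (t1 ++ [b]) (by simp)
      simpa using this

lemma pump_shrink {A : Type} {N : Set A} {s : List A}
    (hs : ∀ a, s.head? = some a → a ∉ N) : Pump N (shrink N s) s := by
  cases s with
  | nil => exact Pump.refl []
  | cons a s =>
    have ha : a ∉ N := hs a rfl
    simp only [shrink, if_neg ha]
    have := pump_shrink_aux (N := N) s [a] (by simp)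
    simpa using this

theorem stmt9 {A : Type} (N : Set A) (hN : N.Nonempty) (s : List A)
    (hs : ∀ a, s.head? = some a → a ∉ N) :
    (∀ t, Pump N s t → relComp (shrinkRel N) (Pump N) s t) ∧
    ((∃ a ∈ s, a ∈ N) →
      {t | Pump N s t} ⊂ {t | relComp (shrinkRel N) (Pump N) s t}) ∧
    ((∀ a ∈ s, a ∉ N) →
      {t | Pump N s t} = {t | relComp (shrinkRel N) (Pump N) s t}) := by
  
  have key : ∀ t, Pump N s t → relComp (shrinkRel N) (Pump N) s t := by
    intro t ht
    exact ⟨shrink N s, rfl, pump_trans (pump_shrink hs) ht⟩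
  refine ⟨key, ?_, ?_⟩
  · intro ⟨a, ha, haN⟩
    constructor
    · intro t ht; exact key t ht
    · intro hsub
      have h1 : shrink N s ∈ {t | relComp (shrinkRel N) (Pump N) s t} :=
        ⟨shrink N s, rfl, Pump.refl _⟩
      have h2 := hsub h1
      have := pump_length h2
      have := shrink_length_lt (N := N) ⟨a, ha, haN⟩
      omega
  · intro h
    ext t
    constructor
    · intro ht; exact key t ht
    · rintro ⟨b, rfl, hp⟩
      rwa [shrink_eq_self h] at hp
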